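/- If the polynomials $t^i + t^j - 2t + 1$ with $3 \le i \le j$ both odd are required to be positive on all of $(0,1)$, then $(i,j) \in \{(3,3),(3,5),(3,7)\}$. -/
import Mathlib


theorem zassenhaus_type_classification (i j : ℕ) (hi : 3 ≤ i) (hij : i ≤ j)
    (hoi : Odd i) (hoj : Odd j)
    (h : ∀ t ∈ Set.Ioo (0 : ℝ) 1, 0 < t ^ i + t ^ j - 2 * t + 1) :
    (i, j) = (3, 3) ∨ (i, j) = (3, 5) ∨ (i, j) = (3, 7) := by
  obtain ⟨a, ha⟩ := hoi
  obtain ⟨b, hb⟩ := hoj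
  by_contra hcon
  simp only [Prod.mk.injEq, not_or, not_and] at hcon
  have ht : (7/10 : ℝ) ∈ Set.Ioo (0:ℝ) 1 := by norm_num
  have H := h _ ht
  have h710 : (0:ℝ) ≤ 7/10 := by norm_num
  have h711 : (7/10:ℝ) ≤ 1 := by norm_num
  have hcase : 5 ≤ i ∨ (i = 3 ∧ 9 ≤ j) := by omega
  rcases hcase with h5 | ⟨h3, h9⟩
  · have hi' : (7/10:ℝ)^i ≤ (7/10)^5 := pow_le_pow_of_le_one h710 h711 h5
    have hj' : (7/10:ℝ)^j ≤ (7/10)^5 := pow_le_pow_of_le_one h710 h711 (le_trans h5 hij)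
    nlinarith [hi', hj']
  · have hj' : (7/10:ℝ)^j ≤ (7/10)^9 := pow_le_pow_of_le_one h710 h711 h9
    rw [h3] at H
    nlinarith [hj']
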